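/- arXiv:0905.3613 — 2 statements merged into one kernel-verified Lean document; each statement's English description precedes it below -/
import Mathlib

section
/- Let Q be a connected quiver with at least three vertices. If Q is of finite mutation type, then every edge of Q is a single edge or a double edge; that is, |B^Q_{ij}| ≤ 2 for all vertices i, j. -/
open scoped Classical

/-- A quiver is encoded by its skew-symmetric exchange matrix. -/
def IsSkewQ {n : ℕ} (B : Matrix (Fin n) (Fin n) ℤ) : Prop :=
  ∀ i j, B j i = - B i j

/-- Fomin-Zelevinsky mutation of a skew-symmetric matrix at vertex `k`. -/
def mutate {n : ℕ} (B : Matrix (Fin n) (Fin n) ℤ) (k : Fin n) : Matrix (Fin n) (Fin n) ℤ :=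
  Matrix.of fun i j =>
    if i = k ∨ j = k then - B i j
    else B i j + Int.sign (B i k) * max (B i k * B k j) 0

def mutateList {n : ℕ} (B : Matrix (Fin n) (Fin n) ℤ) (l : List (Fin n)) :
    Matrix (Fin n) (Fin n) ℤ :=
  l.foldl mutate B

/-- `C` is obtained from `B` by a finite sequence of mutations followed by a
simultaneous relabeling of the index set. -/
def MutEquiv {n m : ℕ} (B : Matrix (Fin n) (Fin n) ℤ) (C : Matrix (Fin m) (Fin m) ℤ) : Prop :=
  ∃ (l : List (Fin n)) (σ : Fin m ≃ Fin n), C = (mutateList B l).submatrix ⇑σ ⇑σ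

/-- Finite mutation type: the mutation class is finite. -/
def FiniteMutationType {n : ℕ} (B : Matrix (Fin n) (Fin n) ℤ) : Prop :=
  {C : Matrix (Fin n) (Fin n) ℤ | MutEquiv B C}.Finite

/-- The underlying undirected graph of the quiver. -/
def quiverGraph {n : ℕ} (B : Matrix (Fin n) (Fin n) ℤ) : SimpleGraph (Fin n) where
  Adj i j := i ≠ j ∧ (B i j ≠ 0 ∨ B j i ≠ 0)
  symm := ⟨fun i j h => ⟨h.1.symm, h.2.symm⟩⟩
  loopless := ⟨fun i h => h.1 rfl⟩

def ConnectedQ {n : ℕ} (B : Matrix (Fin n) (Fin n) ℤ) : Prop :=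
  (quiverGraph B).Connected

def SimplyLaced {n : ℕ} (B : Matrix (Fin n) (Fin n) ℤ) : Prop :=
  ∀ i j, |B i j| ≤ 1

/-- The quiver (matrix) is a cycle: the vertices can be labeled by `ZMod m` so that
adjacency is exactly between consecutive labels. -/
def IsCycleMat {m : ℕ} (C : Matrix (Fin m) (Fin m) ℤ) : Prop :=
  3 ≤ m ∧ ∃ ρ : ZMod m ≃ Fin m, ∀ i j : ZMod m,
    C (ρ i) (ρ j) ≠ 0 ↔ (j = i + 1 ∨ i = j + 1)

/-- The quiver is an oriented cycle. -/
def IsOrientedCycleMat {m : ℕ} (C : Matrix (Fin m) (Fin m) ℤ) : Prop :=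
  3 ≤ m ∧ ∃ ρ : ZMod m ≃ Fin m,
    (∀ i j : ZMod m, C (ρ i) (ρ j) ≠ 0 ↔ (j = i + 1 ∨ i = j + 1)) ∧
    (∀ i : ZMod m, 0 < C (ρ i) (ρ (i + 1)))

def IsNonOrientedCycleMat {m : ℕ} (C : Matrix (Fin m) (Fin m) ℤ) : Prop :=
  IsCycleMat C ∧ ¬ IsOrientedCycleMat C

/-- A double edge: two vertices joined by an edge of weight 2. -/
def IsDoubleEdgeMat {m : ℕ} (C : Matrix (Fin m) (Fin m) ℤ) : Prop :=
  m = 2 ∧ ∃ i j : Fin m, i ≠ j ∧ (C i j = 2 ∨ C i j = -2)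

/-- The Dynkin tree D4: a center joined by single edges (arbitrarily oriented) to
three pairwise non-adjacent vertices. -/
def IsD4Mat {m : ℕ} (C : Matrix (Fin m) (Fin m) ℤ) : Prop :=
  m = 4 ∧ ∃ c : Fin m,
    (∀ i, i ≠ c → (C c i = 1 ∨ C c i = -1)) ∧
    (∀ i j, i ≠ c → j ≠ c → i ≠ j → C i j = 0)

/-- Two adjacent oriented simply-laced triangles sharing the edge `{c,d}`,
with `a`, `b` non-adjacent. -/
def IsTwoTrianglesMat {m : ℕ} (C : Matrix (Fin m) (Fin m) ℤ) : Prop :=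
  m = 4 ∧ ∃ a b c d : Fin m,
    a ≠ b ∧ a ≠ c ∧ a ≠ d ∧ b ≠ c ∧ b ≠ d ∧ c ≠ d ∧
    C a b = 0 ∧ C b a = 0 ∧
    C a c = 1 ∧ C c d = 1 ∧ C d a = 1 ∧ C b c = 1 ∧ C d b = 1

/-- Basic quivers: D4, two adjacent oriented triangles, or a simply-laced
oriented cycle with at least 4 vertices. -/
def IsBasicMat {m : ℕ} (C : Matrix (Fin m) (Fin m) ℤ) : Prop :=
  IsD4Mat C ∨ IsTwoTrianglesMat C ∨
    (4 ≤ m ∧ (∀ i j, |C i j| ≤ 1) ∧ IsOrientedCycleMat C)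

def HasBasicSubquiver {n : ℕ} (B : Matrix (Fin n) (Fin n) ℤ) : Prop :=
  ∃ (m : ℕ) (f : Fin m ↪ Fin n), IsBasicMat (B.submatrix ⇑f ⇑f)

/-- Build a skew-symmetric matrix from a list of weighted arrows. -/
def ofEdges (n : ℕ) (E : List (Fin n × Fin n × ℤ)) : Matrix (Fin n) (Fin n) ℤ :=
  Matrix.of fun i j =>
    E.foldl (fun acc e =>
      acc + (if e.1 = i ∧ e.2.1 = j then e.2.2 else 0)
          + (if e.1 = j ∧ e.2.1 = i then - e.2.2 else 0)) 0

def E6mat : Matrix (Fin 6) (Fin 6) ℤ :=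
  ofEdges 6 [(0,1,1),(1,2,1),(2,3,1),(3,4,1),(2,5,1)]

def E7mat : Matrix (Fin 7) (Fin 7) ℤ :=
  ofEdges 7 [(0,1,1),(1,2,1),(2,3,1),(3,4,1),(4,5,1),(2,6,1)]

def E8mat : Matrix (Fin 8) (Fin 8) ℤ :=
  ofEdges 8 [(0,1,1),(1,2,1),(2,3,1),(3,4,1),(4,5,1),(5,6,1),(2,7,1)]

def E6affMat : Matrix (Fin 7) (Fin 7) ℤ :=
  ofEdges 7 [(0,1,1),(1,2,1),(2,3,1),(3,4,1),(2,5,1),(5,6,1)]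

def E7affMat : Matrix (Fin 8) (Fin 8) ℤ :=
  ofEdges 8 [(0,1,1),(1,2,1),(2,3,1),(3,4,1),(4,5,1),(5,6,1),(3,7,1)]

def E8affMat : Matrix (Fin 9) (Fin 9) ℤ :=
  ofEdges 9 [(0,1,1),(1,2,1),(2,3,1),(3,4,1),(4,5,1),(5,6,1),(6,7,1),(2,8,1)]

/-- E6^(1,1): core b₁=0, b₂=1 (weight-2 arrow b₁→b₂), a₁=2, a₂=3, a₃=4 in oriented
triangles, with one extra path vertex attached at each aᵢ. -/
def E611Mat : Matrix (Fin 8) (Fin 8) ℤ :=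
  ofEdges 8 [(0,1,2),(2,0,1),(1,2,1),(3,0,1),(1,3,1),(4,0,1),(1,4,1),(2,5,1),(3,6,1),(4,7,1)]

def E711Mat : Matrix (Fin 9) (Fin 9) ℤ :=
  ofEdges 9 [(0,1,2),(2,0,1),(1,2,1),(3,0,1),(1,3,1),(4,0,1),(1,4,1),
             (2,5,1),(5,6,1),(4,7,1),(7,8,1)]

def E811Mat : Matrix (Fin 10) (Fin 10) ℤ :=
  ofEdges 10 [(0,1,2),(2,0,1),(1,2,1),(3,0,1),(1,3,1),(4,0,1),(1,4,1),
              (2,5,1),(4,6,1),(6,7,1),(7,8,1),(8,9,1)]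

/-- X6: c=0, a₁=1, a₂=2, b₁=3, b₂=4, d=5. -/
def X6mat : Matrix (Fin 6) (Fin 6) ℤ :=
  ofEdges 6 [(0,1,1),(2,0,1),(0,3,1),(4,0,1),(1,2,2),(3,4,2),(0,5,1)]

/-- X7: c=0, aᵢ=1,3,5, a′ᵢ=2,4,6. -/
def X7mat : Matrix (Fin 7) (Fin 7) ℤ :=
  ofEdges 7 [(0,1,1),(1,2,2),(2,0,1),(0,3,1),(3,4,2),(4,0,1),(0,5,1),(5,6,2),(6,0,1)]

/-- The kernel of B mod 2. -/
def Vbar0 {n : ℕ} (B : Matrix (Fin n) (Fin n) ℤ) : Submodule (ZMod 2) (Fin n → ZMod 2) :=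
  LinearMap.ker (Matrix.mulVecLin (B.map (fun x : ℤ => (x : ZMod 2))))

/-- A basic radical vector: a mod-2 radical vector whose support has exactly two
vertices or is a cycle. -/
def IsBasicRadical {n : ℕ} (B : Matrix (Fin n) (Fin n) ℤ) (u : Fin n → ZMod 2) : Prop :=
  u ∈ Vbar0 B ∧
    ({i | u i ≠ 0}.ncard = 2 ∨
      ∃ (m : ℕ) (f : Fin m ↪ Fin n),
        Set.range ⇑f = {i | u i ≠ 0} ∧ IsCycleMat (B.submatrix ⇑f ⇑f))

/-- The span of the basic radical vectors. -/
def Vbar00 {n : ℕ} (B : Matrix (Fin n) (Fin n) ℤ) : Submodule (ZMod 2) (Fin n → ZMod 2) :=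
  Submodule.span (ZMod 2) {u | IsBasicRadical B u}

def Mx (x y z : ℤ) : Matrix (Fin 3) (Fin 3) ℤ := !![0, x, -z; -x, 0, y; z, -y, 0]

lemma sign_max_comm (a b : ℤ) : a.sign * max (a*b) 0 = b.sign * max (b*a) 0 := by
  rcases lt_trichotomy a 0 with ha | rfl | ha
  · rcases lt_trichotomy b 0 with hb | rfl | hb
    · rw [Int.sign_eq_neg_one_of_neg ha, Int.sign_eq_neg_one_of_neg hb, mul_comm a b]
    · simp
    · have h1 : a * b < 0 := mul_neg_of_neg_of_pos ha hb
      have h2 : b * a < 0 := mul_neg_of_pos_of_neg hb ha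
      rw [max_eq_right h1.le, max_eq_right h2.le]; ring
  · simp
  · rcases lt_trichotomy b 0 with hb | rfl | hb
    · have h1 : a * b < 0 := mul_neg_of_pos_of_neg ha hb
      have h2 : b * a < 0 := mul_neg_of_neg_of_pos hb ha
      rw [max_eq_right h1.le, max_eq_right h2.le]; ring
    · simp
    · rw [Int.sign_eq_one_of_pos ha, Int.sign_eq_one_of_pos hb, mul_comm a b]

lemma L0 (x y z : ℤ) : mutate (Mx x y z) 0 = Mx (-x) (y - Int.sign x * max (x*z) 0) (-z) := by
  funext i j
  fin_cases i <;> fin_cases j <;>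
    simp [mutate, Mx, Int.sign_neg, neg_mul_neg] <;> ring_nf <;>
    first | (rw [sign_max_comm]; ring) | exact Or.inr (sq_nonneg _)

lemma L1 (x y z : ℤ) : mutate (Mx x y z) 1 = Mx (-x) (-y) (z - Int.sign x * max (x*y) 0) := by
  funext i j
  fin_cases i <;> fin_cases j <;>
    simp [mutate, Mx, Int.sign_neg, neg_mul_neg] <;> ring_nf <;>
    first | (rw [sign_max_comm]; ring) | exact Or.inr (sq_nonneg _)

lemma L2 (x y z : ℤ) : mutate (Mx x y z) 2 = Mx (x - Int.sign z * max (y*z) 0) (-y) (-z) := by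
  funext i j
  fin_cases i <;> fin_cases j <;>
    simp [mutate, Mx, Int.sign_neg, neg_mul_neg] <;> ring_nf <;>
    first | (rw [sign_max_comm]; ring) | exact Or.inr (sq_nonneg _)

lemma mutate_neg {n : ℕ} (B : Matrix (Fin n) (Fin n) ℤ) (k : Fin n) :
    mutate (-B) k = - mutate B k := by
  funext i j
  by_cases h : i = k ∨ j = k <;>
    simp [mutate, h, Int.sign_neg, neg_mul_neg] <;> ring

lemma mutateList_neg {n : ℕ} (l : List (Fin n)) (B : Matrix (Fin n) (Fin n) ℤ) :
    mutateList (-B) l = - mutateList B l := by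
  induction l generalizing B with
  | nil => rfl
  | cons k l ih => simp only [mutateList, List.foldl_cons, mutate_neg]; exact ih _

lemma mutateList_append {n : ℕ} (B : Matrix (Fin n) (Fin n) ℤ) (l₁ l₂ : List (Fin n)) :
    mutateList B (l₁ ++ l₂) = mutateList (mutateList B l₁) l₂ :=
  List.foldl_append ..

lemma negMx (x y z : ℤ) : Mx (-x) (-y) (-z) = - Mx x y z := by
  funext i j; fin_cases i <;> fin_cases j <;> simp [Mx]

def Inv3 (x y z : ℤ) : Prop := 1 ≤ x ∧ 1 ≤ y ∧ 1 ≤ z ∧ (3 ≤ x ∨ 3 ≤ y ∨ 3 ≤ z)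

lemma growStep {x y z : ℤ} (h : Inv3 x y z) :
    ∃ (k : Fin 3) (x' y' z' : ℤ), mutate (Mx x y z) k = - Mx x' y' z' ∧ Inv3 x' y' z' ∧
      x + y + z + 1 ≤ x' + y' + z' := by
  obtain ⟨hx, hy, hz, h3⟩ := h
  by_cases h1 : y ≤ x ∧ y ≤ z
  · refine ⟨0, x, x*z - y, z, ?_, ?_, ?_⟩
    · rw [L0, Int.sign_eq_one_of_pos (by omega),
        max_eq_left (by positivity), ← negMx]; ring_nf
    · have : 2*y + 1 ≤ x*z := by
        rcases h3 with h3 | h3 | h3 <;> nlinarith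
      exact ⟨hx, by omega, hz, by omega⟩
    · have : 2*y + 1 ≤ x*z := by
        rcases h3 with h3 | h3 | h3 <;> nlinarith
      omega
  · by_cases h2 : z ≤ x ∧ z ≤ y
    · refine ⟨1, x, y, x*y - z, ?_, ?_, ?_⟩
      · rw [L1, Int.sign_eq_one_of_pos (by omega),
          max_eq_left (by positivity), ← negMx]; ring_nf
      · have : 2*z + 1 ≤ x*y := by
          rcases h3 with h3 | h3 | h3 <;> nlinarith
        exact ⟨hx, hy, by omega, by omega⟩
      · have : 2*z + 1 ≤ x*y := by
          rcases h3 with h3 | h3 | h3 <;> nlinarith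
        omega
    · have h1' : x ≤ y ∧ x ≤ z := by omega
      refine ⟨2, y*z - x, y, z, ?_, ?_, ?_⟩
      · rw [L2, Int.sign_eq_one_of_pos (by omega),
          max_eq_left (by positivity), ← negMx]; ring_nf
      · have : 2*x + 1 ≤ y*z := by
          rcases h3 with h3 | h3 | h3 <;> nlinarith
        exact ⟨by omega, hy, hz, by omega⟩
      · have : 2*x + 1 ≤ y*z := by
          rcases h3 with h3 | h3 | h3 <;> nlinarith
        omega

lemma grow (N : ℕ) : ∀ x y z : ℤ, Inv3 x y z →
    ∃ (l : List (Fin 3)) (x' y' z' : ℤ), Inv3 x' y' z' ∧ (N : ℤ) ≤ x' + y' + z' ∧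
      (mutateList (Mx x y z) l = Mx x' y' z' ∨ mutateList (Mx x y z) l = - Mx x' y' z') := by
  induction N with
  | zero =>
    intro x y z h
    exact ⟨[], x, y, z, h, by have := h.1; have := h.2.1; have := h.2.2.1; push_cast; omega,
      Or.inl rfl⟩
  | succ N ih =>
    intro x y z h
    obtain ⟨l, x', y', z', h', hsum, hcase⟩ := ih x y z h
    obtain ⟨k, x'', y'', z'', hk, h'', hsum'⟩ := growStep h'
    have h1 : 1 ≤ x'' := h''.1
    refine ⟨l ++ [k], x'', y'', z'', h'', by push_cast; omega, ?_⟩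
    rw [mutateList_append]
    rcases hcase with hc | hc <;> rw [hc]
    · exact Or.inr (by simp only [mutateList, List.foldl_cons, List.foldl_nil, hk])
    · refine Or.inl ?_
      simp only [mutateList, List.foldl_cons, List.foldl_nil, mutate_neg, hk, neg_neg]

lemma normalize3 {x y z : ℤ} (hx : 3 ≤ x) (hyz : y ≠ 0 ∨ z ≠ 0) :
    ∃ (l : List (Fin 3)) (y' z' : ℤ), 1 ≤ y' ∧ 1 ≤ z' ∧
      (mutateList (Mx x y z) l = Mx x y' z' ∨ mutateList (Mx x y z) l = - Mx x y' z') := by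
  have hsx : Int.sign x = 1 := Int.sign_eq_one_of_pos (by omega)
  have step1 : ∀ y₁ z₁ : ℤ, 1 ≤ y₁ → z₁ ≤ 0 →
      mutate (Mx x y₁ z₁) 1 = - Mx x y₁ (x*y₁ - z₁) := by
    intro y₁ z₁ hy₁ hz₁
    rw [L1, hsx, max_eq_left (by positivity), ← negMx]; ring_nf
  rcases le_or_gt 1 y with hy | hy
  · rcases le_or_gt 1 z with hz | hz
    · exact ⟨[], y, z, hy, hz, Or.inl rfl⟩
    · refine ⟨[1], y, x*y - z, hy, by nlinarith, Or.inr ?_⟩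
      show mutate (Mx x y z) 1 = _
      exact step1 y z hy (by omega)
  · rcases le_or_gt y 0 with hy' | hy'
    swap
    · omega
    rcases eq_or_lt_of_le hy' with rfl | hyneg
    · -- y = 0, z ≠ 0
      have hz : z ≠ 0 := by tauto
      rcases lt_or_gt_of_ne hz with hzneg | hzpos
      · -- y = 0, z ≤ -1 : l = [2,0]
        refine ⟨[2,0], x*(-z), -z, by nlinarith, by omega, Or.inr ?_⟩
        show mutate (mutate (Mx x 0 z) 2) 0 = _
        have e2 : mutate (Mx x 0 z) 2 = Mx x 0 (-z) := by
          rw [L2]; simp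
        rw [e2, L0, hsx, max_eq_left (by nlinarith : (0:ℤ) ≤ x * -z), ← negMx]; ring_nf
      · -- y = 0, z ≥ 1 : l = [0]
        refine ⟨[0], x*z, z, by nlinarith, by omega, Or.inr ?_⟩
        show mutate (Mx x 0 z) 0 = _
        rw [L0, hsx, max_eq_left (by positivity), ← negMx]; ring_nf
    · -- y ≤ -1
      rcases le_or_gt 0 z with hz | hz
      · -- z ≥ 0 : l = [2,1]
        refine ⟨[2,1], -y, z - x*y, by omega, by nlinarith, Or.inr ?_⟩
        show mutate (mutate (Mx x y z) 2) 1 = _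
        have e2 : mutate (Mx x y z) 2 = Mx x (-y) (-z) := by
          rw [L2, max_eq_right (by nlinarith : y*z ≤ 0)]; ring_nf
        rw [e2, step1 (-y) (-z) (by omega) (by omega)]; ring_nf
      · -- z ≤ -1 : l = [0,1]
        refine ⟨[0,1], -y, -(x*y) - z, by omega, by nlinarith, Or.inl ?_⟩
        show mutate (mutate (Mx x y z) 0) 1 = _
        have e0 : mutate (Mx x y z) 0 = - Mx x (-y) z := by
          rw [L0, hsx, max_eq_right (by nlinarith : x*z ≤ 0), ← negMx]; ring_nf
        rw [e0, mutate_neg, step1 (-y) z (by omega) (by omega), neg_neg]; ring_nf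

lemma Mx01 (a b c : ℤ) : Mx a b c 0 1 = a := by simp [Mx]
lemma Mx12 (a b c : ℤ) : Mx a b c 1 2 = b := by simp [Mx]
lemma Mx20 (a b c : ℤ) : Mx a b c 2 0 = c := by simp [Mx]

lemma core3 {x y z : ℤ} (hx : 3 ≤ x) (hyz : y ≠ 0 ∨ z ≠ 0) (N : ℕ) :
    ∃ l : List (Fin 3),
      (N : ℤ) ≤ |mutateList (Mx x y z) l 0 1| + |mutateList (Mx x y z) l 1 2| +
        |mutateList (Mx x y z) l 2 0| := by
  obtain ⟨l₁, y', z', hy', hz', hc⟩ := normalize3 hx hyz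
  obtain ⟨l₂, a, b, c, hinv, hsum, hc₂⟩ := grow N x y' z' ⟨by omega, hy', hz', Or.inl hx⟩
  refine ⟨l₁ ++ l₂, ?_⟩
  rw [mutateList_append]
  obtain ⟨ha, hb, hcc, -⟩ := hinv
  have key : mutateList (mutateList (Mx x y z) l₁) l₂ = Mx a b c ∨
      mutateList (mutateList (Mx x y z) l₁) l₂ = - Mx a b c := by
    rcases hc with hc | hc <;> rw [hc]
    · exact hc₂
    · rw [mutateList_neg]
      rcases hc₂ with h2 | h2 <;> rw [h2]
      · exact Or.inr rfl
      · exact Or.inl (neg_neg _)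
  rcases key with hk | hk <;> rw [hk] <;>
    simp only [Matrix.neg_apply, abs_neg, Mx01, Mx12, Mx20] <;>
    rw [abs_of_pos (by omega), abs_of_pos (by omega), abs_of_pos (by omega)] <;> omega

lemma mutate_submatrix {n : ℕ} (B : Matrix (Fin n) (Fin n) ℤ) (f : Fin 3 → Fin n)
    (hf : Function.Injective f) (k : Fin 3) :
    (mutate B (f k)).submatrix f f = mutate (B.submatrix f f) k := by
  funext i j
  simp [mutate, Matrix.submatrix_apply, hf.eq_iff]

lemma mutateList_submatrix {n : ℕ} (f : Fin 3 → Fin n) (hf : Function.Injective f) :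
    ∀ (l : List (Fin 3)) (B : Matrix (Fin n) (Fin n) ℤ),
      (mutateList B (l.map f)).submatrix f f = mutateList (B.submatrix f f) l := by
  intro l
  induction l with
  | nil => intro B; rfl
  | cons k l ih =>
    intro B
    show (mutateList (mutate B (f k)) (l.map f)).submatrix f f = _
    rw [ih (mutate B (f k)), mutate_submatrix B f hf k]
    rfl

lemma walk_boundary {V : Type*} {G : SimpleGraph V} {S : Set V} :
    ∀ {a v : V}, G.Walk a v → a ∈ S → v ∉ S → ∃ p ∈ S, ∃ q, q ∉ S ∧ G.Adj p q := by
  intro a v w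
  induction w with
  | nil => intro ha hv; exact absurd ha hv
  | @cons a b v h w ih =>
    intro ha hv
    by_cases hb : b ∈ S
    · exact ih hb hv
    · exact ⟨a, ha, b, hb, h⟩

lemma skew_eq_Mx (C : Matrix (Fin 3) (Fin 3) ℤ) (h : ∀ i j, C j i = - C i j) :
    C = Mx (C 0 1) (C 1 2) (C 2 0) := by
  have h00 := h 0 0; have h11 := h 1 1; have h22 := h 2 2
  have h01 := h 0 1; have h12 := h 1 2; have h20 := h 2 0
  funext i j
  fin_cases i <;> fin_cases j <;> simp [Mx] <;> omega


/-- every edge of a connected finite-mutation-type quiver with at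
least three vertices is a single or double edge. -/
theorem stmt0 {n : ℕ} (B : Matrix (Fin n) (Fin n) ℤ) (hB : IsSkewQ B) (hn : 3 ≤ n)
    (hconn : ConnectedQ B) (hfin : FiniteMutationType B) :
    ∀ i j, |B i j| ≤ 2 := by
  by_contra hcon
  push_neg at hcon
  obtain ⟨i0, j0, hbig⟩ := hcon
  have hij : i0 ≠ j0 := by
    rintro rfl
    have h0 := hB i0 i0
    have : B i0 i0 = 0 := by omega
    rw [this] at hbig; simp at hbig
  -- a third vertex exists
  have hcard : ∃ v : Fin n, v ≠ i0 ∧ v ≠ j0 := by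
    by_contra hv
    push_neg at hv
    have hsub : (Finset.univ : Finset (Fin n)) ⊆ {i0, j0} := by
      intro v _
      rcases eq_or_ne v i0 with rfl | hne
      · simp
      · simp [hv v hne]
    have h1 := Finset.card_le_card hsub
    have h2 : ({i0, j0} : Finset (Fin n)).card ≤ 2 := by
      refine le_trans (Finset.card_insert_le _ _) ?_
      simp
    simp [Finset.card_univ] at h1
    omega
  obtain ⟨v, hv1, hv2⟩ := hcard
  obtain ⟨w⟩ := hconn.preconnected i0 v
  obtain ⟨p, hp, q, hq, hadj⟩ := walk_boundary (S := {i0, j0}) w (by simp) (by simp [hv1, hv2])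
  simp only [Set.mem_insert_iff, Set.mem_singleton_iff] at hp hq
  push_neg at hq
  obtain ⟨hq1, hq2⟩ := hq
  have hpq : B p q ≠ 0 := by
    rcases hadj.2 with h | h
    · exact h
    · have := hB p q; omega
  have hf : Function.Injective (![i0, j0, q] : Fin 3 → Fin n) := by
    intro a b hab
    fin_cases a <;> fin_cases b <;> simp at hab ⊢ <;> simp_all
  set C := B.submatrix ![i0, j0, q] ![i0, j0, q] with hCdef
  have hCskew : ∀ i j, C j i = - C i j := fun i j => hB _ _
  have hCeq : C = Mx (C 0 1) (C 1 2) (C 2 0) := skew_eq_Mx C hCskew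
  have hC01 : C 0 1 = B i0 j0 := rfl
  have hC12 : C 1 2 = B j0 q := rfl
  have hC20 : C 2 0 = B q i0 := rfl
  have hyz : C 1 2 ≠ 0 ∨ C 2 0 ≠ 0 := by
    rcases hp with hp | hp
    · right
      rw [hC20]
      have h1 := hB i0 q
      rw [hp] at hpq
      omega
    · left
      rw [hC12]
      rw [hp] at hpq
      exact hpq
  -- bound from finiteness
  set G : Matrix (Fin n) (Fin n) ℤ → ℤ :=
    fun A => |A i0 j0| + |A j0 q| + |A q i0| with hGdef
  obtain ⟨b, hb⟩ := (hfin.image G).bddAbove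
  set N : ℕ := b.toNat + 1 with hNdef
  have hNb : b < (N : ℤ) := by
    have := Int.self_le_toNat b
    push_cast [hNdef]
    omega
  have main : ∃ l : List (Fin 3),
      (N : ℤ) ≤ |mutateList C l 0 1| + |mutateList C l 1 2| + |mutateList C l 2 0| := by
    rcases le_or_gt 3 (C 0 1) with hx | hx
    · obtain ⟨l, hl⟩ := core3 hx hyz N
      exact ⟨l, by rwa [← hCeq] at hl⟩
    · have hx' : 3 ≤ -(C 0 1) := by
        rcases abs_cases (B i0 j0) with ⟨h1, h2⟩ | ⟨h1, h2⟩ <;> rw [hC01] at hx ⊢ <;> omega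
      have hyz' : -(C 1 2) ≠ 0 ∨ -(C 2 0) ≠ 0 := by
        rcases hyz with h | h
        · exact Or.inl (neg_ne_zero.mpr h)
        · exact Or.inr (neg_ne_zero.mpr h)
      have hCneg : -C = Mx (-(C 0 1)) (-(C 1 2)) (-(C 2 0)) := by
        rw [negMx, ← hCeq]
      obtain ⟨l, hl⟩ := core3 hx' hyz' N
      rw [← hCneg, mutateList_neg] at hl
      exact ⟨l, by simpa using hl⟩
  obtain ⟨l, hl⟩ := main
  have hmem : MutEquiv B (mutateList B (l.map ![i0, j0, q])) :=
    ⟨l.map ![i0, j0, q], Equiv.refl _, by simp⟩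
  have hle : G (mutateList B (l.map ![i0, j0, q])) ≤ b :=
    hb (Set.mem_image_of_mem G hmem)
  have hsub : (mutateList B (l.map ![i0, j0, q])).submatrix ![i0, j0, q] ![i0, j0, q] =
      mutateList C l := mutateList_submatrix _ hf l B
  have hGval : G (mutateList B (l.map ![i0, j0, q])) =
      |mutateList C l 0 1| + |mutateList C l 1 2| + |mutateList C l 2 0| := by
    rw [hGdef, ← hsub]
    rfl
  omega
end

section
/- Let Q be a connected quiver with exactly three vertices which has a double edge. Then Q is of finite mutation type if and only if Q is an oriented 3-cycle whose multiset of edge weights is {2,1,1} or {2,2,2}; that is, up to relabeling of the three vertices, B_{12}, B_{23}, B_{31} are all positive and equal to 2,1,1 or to 2,2,2 in some order. -/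
open scoped Classical

namespace StmtAux

def mat (p q r : ℤ) : Matrix (Fin 3) (Fin 3) ℤ := !![0, p, q; -p, 0, r; -q, -r, 0]

lemma skew_eq_mat (B : Matrix (Fin 3) (Fin 3) ℤ) (hB : IsSkewQ B) :
    B = mat (B 0 1) (B 0 2) (B 1 2) := by
  have h0 := hB 0 0; have h1 := hB 1 1; have h2 := hB 2 2
  have h01 := hB 0 1; have h02 := hB 0 2; have h12 := hB 1 2
  ext i j
  fin_cases i <;> fin_cases j <;> simp [mat] <;> omega

lemma diag_aux (x : ℤ) : Int.sign x * max (x * (-x)) 0 = 0 := by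
  have h : x * (-x) ≤ 0 := by nlinarith [sq_nonneg x]
  rw [max_eq_right h, mul_zero]

lemma diag_aux' (x : ℤ) : Int.sign (-x) * max ((-x) * x) 0 = 0 := by
  have := diag_aux (-x); rwa [neg_neg] at this

lemma sign_max_aux (a b : ℤ) : Int.sign b * max (a * b) 0 = Int.sign a * max (a * b) 0 := by
  rcases le_or_gt (a * b) 0 with h | h
  · rw [max_eq_right h, mul_zero, mul_zero]
  · have hs : Int.sign a = Int.sign b := by
      rcases lt_trichotomy a 0 with ha | ha | ha
      · rcases lt_trichotomy b 0 with hb | hb | hb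
        · rw [Int.sign_eq_neg_one_of_neg ha, Int.sign_eq_neg_one_of_neg hb]
        · exfalso; subst hb; simp at h
        · exfalso; nlinarith
      · exfalso; subst ha; simp at h
      · rcases lt_trichotomy b 0 with hb | hb | hb
        · exfalso; nlinarith
        · exfalso; subst hb; simp at h
        · rw [Int.sign_eq_one_of_pos ha, Int.sign_eq_one_of_pos hb]
    rw [hs]

lemma opp_aux (p q : ℤ) :
    Int.sign (-q) * max ((-q) * p) 0 = -(Int.sign (-p) * max ((-p) * q) 0) := by
  have h1 : (-q) * p = p * (-q) := by ring
  have h2 : (-p) * q = p * (-q) := by ring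
  rw [h1, h2, sign_max_aux p (-q), Int.sign_neg]; ring

lemma opp_aux1 (p r : ℤ) :
    Int.sign (-r) * max ((-r) * (-p)) 0 = -(Int.sign p * max (p * r) 0) := by
  have h1 : (-r) * (-p) = p * r := by ring
  rw [h1, Int.sign_neg, ← sign_max_aux p r]; ring

lemma opp_aux2 (q r : ℤ) :
    Int.sign r * max (r * (-q)) 0 = -(Int.sign q * max (q * (-r)) 0) := by
  have h1 : r * (-q) = (-q) * r := by ring
  have h2 : q * (-r) = (-q) * r := by ring
  rw [h1, h2, sign_max_aux (-q) r, Int.sign_neg]; ring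

lemma opp_genA (a b : ℤ) :
    Int.sign a * max (-(a * b)) 0 = -(Int.sign b * max (-(b * a)) 0) := by
  have h1 : -(a * b) = (-b) * a := by ring
  have h2 : -(b * a) = (-b) * a := by ring
  rw [h1, h2, sign_max_aux (-b) a, Int.sign_neg]; ring

lemma opp_genB (a b : ℤ) :
    Int.sign a * max (a * b) 0 = Int.sign b * max (b * a) 0 := by
  rw [mul_comm b a]; exact (sign_max_aux a b).symm

lemma mutate0 (p q r : ℤ) :
    mutate (mat p q r) 0 = mat (-p) (-q) (r + Int.sign (-p) * max ((-p) * q) 0) := by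
  ext i j
  fin_cases i <;> fin_cases j <;>
    simp [mutate, mat] <;>
    first
      | exact Or.inr (mul_self_nonneg _)
      | linarith [opp_genA q p]

lemma mutate1 (p q r : ℤ) :
    mutate (mat p q r) 1 = mat (-p) (q + Int.sign p * max (p * r) 0) (-r) := by
  ext i j
  fin_cases i <;> fin_cases j <;>
    simp [mutate, mat] <;>
    first
      | exact Or.inr (mul_self_nonneg _)
      | linarith [opp_genB r p]

lemma mutate2 (p q r : ℤ) :
    mutate (mat p q r) 2 = mat (p + Int.sign q * max (q * (-r)) 0) (-q) (-r) := by
  ext i j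
  fin_cases i <;> fin_cases j <;>
    simp [mutate, mat] <;>
    first
      | exact Or.inr (mul_self_nonneg _)
      | linarith [opp_genA r q]


def rot : Fin 3 ≃ Fin 3 :=
  ⟨fun i => ![1, 2, 0] i, fun i => ![2, 0, 1] i, by decide, by decide⟩
def s01 : Fin 3 ≃ Fin 3 := ⟨fun i => ![1, 0, 2] i, fun i => ![1, 0, 2] i, by decide, by decide⟩
def s02 : Fin 3 ≃ Fin 3 := ⟨fun i => ![2, 1, 0] i, fun i => ![2, 1, 0] i, by decide, by decide⟩
def s12 : Fin 3 ≃ Fin 3 := ⟨fun i => ![0, 2, 1] i, fun i => ![0, 2, 1] i, by decide, by decide⟩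

lemma submatrix_rot (p q r : ℤ) :
    (mat p q r).submatrix ⇑rot ⇑rot = mat r (-p) (-q) := by
  ext i j; fin_cases i <;> fin_cases j <;> simp [mat, rot, Matrix.submatrix_apply]

lemma submatrix_s01 (p q r : ℤ) :
    (mat p q r).submatrix ⇑s01 ⇑s01 = mat (-p) r q := by
  ext i j; fin_cases i <;> fin_cases j <;> simp [mat, s01, Matrix.submatrix_apply]

lemma submatrix_s02 (p q r : ℤ) :
    (mat p q r).submatrix ⇑s02 ⇑s02 = mat (-r) (-q) (-p) := by
  ext i j; fin_cases i <;> fin_cases j <;> simp [mat, s02, Matrix.submatrix_apply]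

lemma submatrix_s12 (p q r : ℤ) :
    (mat p q r).submatrix ⇑s12 ⇑s12 = mat q p (-r) := by
  ext i j; fin_cases i <;> fin_cases j <;> simp [mat, s12, Matrix.submatrix_apply]

lemma mutateList_cons {n : ℕ} (B : Matrix (Fin n) (Fin n) ℤ) (k : Fin n) (l : List (Fin n)) :
    mutateList B (k :: l) = mutateList (mutate B k) l := rfl

lemma mutateList_append {n : ℕ} (B : Matrix (Fin n) (Fin n) ℤ) (l1 l2 : List (Fin n)) :
    mutateList B (l1 ++ l2) = mutateList (mutateList B l1) l2 := by
  simp [mutateList, List.foldl_append]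

lemma mutate_submatrix {n m : ℕ} (B : Matrix (Fin n) (Fin n) ℤ) (σ : Fin m ≃ Fin n) (k : Fin m) :
    mutate (B.submatrix ⇑σ ⇑σ) k = (mutate B (σ k)).submatrix ⇑σ ⇑σ := by
  ext i j
  simp only [mutate, Matrix.submatrix_apply, Matrix.of_apply, EmbeddingLike.apply_eq_iff_eq]

lemma mutateList_submatrix {n m : ℕ} (σ : Fin m ≃ Fin n) (l : List (Fin m)) :
    ∀ (B : Matrix (Fin n) (Fin n) ℤ),
      mutateList (B.submatrix ⇑σ ⇑σ) l = (mutateList B (l.map ⇑σ)).submatrix ⇑σ ⇑σ := by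
  induction l with
  | nil => intro B; rfl
  | cons k l ih =>
      intro B
      rw [List.map_cons, mutateList_cons, mutateList_cons, mutate_submatrix]
      exact ih (mutate B (σ k))

lemma mutEquiv_refl {n : ℕ} (B : Matrix (Fin n) (Fin n) ℤ) : MutEquiv B B :=
  ⟨[], Equiv.refl _, by simp [mutateList]⟩

lemma mutEquiv_trans {n m p : ℕ} {B : Matrix (Fin n) (Fin n) ℤ} {C : Matrix (Fin m) (Fin m) ℤ}
    {D : Matrix (Fin p) (Fin p) ℤ} (h1 : MutEquiv B C) (h2 : MutEquiv C D) : MutEquiv B D := by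
  obtain ⟨l1, σ1, rfl⟩ := h1
  obtain ⟨l2, σ2, rfl⟩ := h2
  refine ⟨l1 ++ l2.map ⇑σ1, σ2.trans σ1, ?_⟩
  rw [mutateList_submatrix, Matrix.submatrix_submatrix, mutateList_append, Equiv.coe_trans]

lemma mutEquiv_mutate {n : ℕ} (B : Matrix (Fin n) (Fin n) ℤ) (k : Fin n) :
    MutEquiv B (mutate B k) :=
  ⟨[k], Equiv.refl _, by simp [mutateList]⟩

lemma mutEquiv_perm {n : ℕ} (B : Matrix (Fin n) (Fin n) ℤ) (σ : Fin n ≃ Fin n) :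
    MutEquiv B (B.submatrix ⇑σ ⇑σ) :=
  ⟨[], σ, rfl⟩


def Qc (a b c : ℤ) : Prop := 1 ≤ a ∧ 2 ≤ b ∧ 1 ≤ c ∧ c < a * (b - 1)

def GOOD (B : Matrix (Fin 3) (Fin 3) ℤ) : Prop :=
  ∃ a b c : ℤ, Qc a b c ∧ MutEquiv B (mat a (-c) b)

lemma GOOD_of_mutate (B : Matrix (Fin 3) (Fin 3) ℤ) (k : Fin 3)
    (h : GOOD (mutate B k)) : GOOD B := by
  obtain ⟨a, b, c, hq, he⟩ := h
  exact ⟨a, b, c, hq, mutEquiv_trans (mutEquiv_mutate B k) he⟩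

lemma GOOD_of_perm (B : Matrix (Fin 3) (Fin 3) ℤ) (σ : Fin 3 ≃ Fin 3)
    (h : GOOD (B.submatrix ⇑σ ⇑σ)) : GOOD B := by
  obtain ⟨a, b, c, hq, he⟩ := h
  exact ⟨a, b, c, hq, mutEquiv_trans (mutEquiv_perm B σ) he⟩

lemma S0 (a b c : ℤ) (ha : 1 ≤ a) (hb : 1 ≤ b) :
    MutEquiv (mat a (-c) b) (mat (a * b - c) (-a) b) := by
  have e : -c + Int.sign a * max (a * b) 0 = a * b - c := by
    rw [Int.sign_eq_one_of_pos (by omega), max_eq_left (by nlinarith), one_mul]; ring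
  have h1 : mutate (mat a (-c) b) 1 = mat (-a) (a * b - c) (-b) := by
    rw [mutate1, e]
  have h2 := mutEquiv_mutate (mat a (-c) b) 1
  rw [h1] at h2
  have h3 := mutEquiv_perm (mat (-a) (a * b - c) (-b)) s12
  rw [submatrix_s12, neg_neg] at h3
  exact mutEquiv_trans h2 h3

lemma rotM (u v w : ℤ) : MutEquiv (mat u (-w) v) (mat v (-u) w) := by
  have h := mutEquiv_perm (mat u (-w) v) rot
  rw [submatrix_rot, neg_neg] at h
  exact h

lemma Qc_step {a b c : ℤ} (h : Qc a b c) : Qc (a * b - c) b a ∧ a < a * b - c := by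
  obtain ⟨ha, hb, hc, h4⟩ := h
  have e : a * (b - 1) = a * b - a := by ring
  rw [e] at h4
  have hlt : a < a * b - c := by linarith
  have h5 : (1 : ℤ) ≤ b - 1 := by linarith
  have h6 : (1 : ℤ) ≤ a * b - c := by linarith
  have h7 : (a * b - c) * 1 ≤ (a * b - c) * (b - 1) :=
    mul_le_mul_of_nonneg_left h5 (by linarith)
  rw [mul_one] at h7
  exact ⟨⟨by linarith, hb, ha, by linarith⟩, hlt⟩

def seqf (a b c : ℤ) : ℕ → ℤ × ℤ × ℤ
  | 0 => (a, b, c)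
  | n + 1 =>
      ((seqf a b c n).1 * (seqf a b c n).2.1 - (seqf a b c n).2.2,
        (seqf a b c n).2.1, (seqf a b c n).1)

lemma INF {a b c : ℤ} (h : Qc a b c) :
    {C : Matrix (Fin 3) (Fin 3) ℤ | MutEquiv (mat a (-c) b) C}.Infinite := by
  have key : ∀ n, Qc (seqf a b c n).1 (seqf a b c n).2.1 (seqf a b c n).2.2 ∧
      MutEquiv (mat a (-c) b)
        (mat (seqf a b c n).1 (-(seqf a b c n).2.2) (seqf a b c n).2.1) := by
    intro n
    induction n with
    | zero => exact ⟨h, mutEquiv_refl _⟩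
    | succ n ih =>
        obtain ⟨hq, he⟩ := ih
        refine ⟨(Qc_step hq).1, ?_⟩
        exact mutEquiv_trans he
          (S0 (seqf a b c n).1 (seqf a b c n).2.1 (seqf a b c n).2.2 hq.1
            (by have := hq.2.1; linarith))
  have mono : StrictMono fun n => (seqf a b c n).1 :=
    strictMono_nat_of_lt_succ fun n => (Qc_step (key n).1).2
  apply Set.infinite_of_injective_forall_mem
    (f := fun n : ℕ => mat (seqf a b c n).1 (-(seqf a b c n).2.2) (seqf a b c n).2.1)
  · intro m n hmn
    have : (seqf a b c m).1 = (seqf a b c n).1 := by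
      simpa [mat] using congrArg (fun M : Matrix (Fin 3) (Fin 3) ℤ => M 0 1) hmn
    exact mono.injective this
  · exact fun n => (key n).2

lemma rot_select (u v w : ℤ) (hu : 1 ≤ u) (hv : 1 ≤ v) (hw : 1 ≤ w)
    (e1 : ¬(u = 1 ∧ v = 1 ∧ w = 1))
    (e2 : ¬(u = 1 ∧ v = 1 ∧ w = 2))
    (e3 : ¬(u = 2 ∧ v = 1 ∧ w = 1))
    (e4 : ¬(u = 1 ∧ v = 2 ∧ w = 1))
    (e5 : ¬(u = 2 ∧ v = 2 ∧ w = 2)) :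
    Qc u v w ∨ Qc v w u ∨ Qc w u v := by
  unfold Qc
  by_cases hu2 : 2 ≤ u <;> by_cases hv2 : 2 ≤ v <;> by_cases hw2 : 2 ≤ w
  · -- all ≥ 2
    rcases le_total u v with h | h
    · rcases le_total v w with h' | h'
      · right; left
        have h3 : 3 ≤ w := by omega
        refine ⟨hv, by omega, hu, ?_⟩
        nlinarith [mul_le_mul_of_nonneg_right hv2 (show (0:ℤ) ≤ w - 1 by omega)]
      · left
        have h3 : 3 ≤ v := by omega
        refine ⟨hu, by omega, hw, ?_⟩
        nlinarith [mul_le_mul_of_nonneg_right hu2 (show (0:ℤ) ≤ v - 1 by omega)]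
    · rcases le_total u w with h' | h'
      · right; left
        have h3 : 3 ≤ w := by omega
        refine ⟨hv, by omega, hu, ?_⟩
        nlinarith [mul_le_mul_of_nonneg_right hv2 (show (0:ℤ) ≤ w - 1 by omega)]
      · right; right
        have h3 : 3 ≤ u := by omega
        refine ⟨hw, by omega, hv, ?_⟩
        nlinarith [mul_le_mul_of_nonneg_right hw2 (show (0:ℤ) ≤ u - 1 by omega)]
  · -- u,v ≥ 2, w = 1
    left
    refine ⟨hu, hv2, hw, ?_⟩
    have hw1 : w = 1 := by omega
    nlinarith [mul_le_mul_of_nonneg_right hu2 (show (0:ℤ) ≤ v - 1 by omega)]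
  · -- u ≥ 2, v = 1, w ≥ 2
    right; right
    refine ⟨hw, hu2, hv, ?_⟩
    have hv1 : v = 1 := by omega
    nlinarith [mul_le_mul_of_nonneg_right hw2 (show (0:ℤ) ≤ u - 1 by omega)]
  · -- u ≥ 3, v = w = 1
    right; right
    have h3 : 3 ≤ u := by omega
    refine ⟨hw, by omega, hv, ?_⟩
    have hv1 : v = 1 := by omega
    have hw1 : w = 1 := by omega
    subst hv1; subst hw1; nlinarith
  · -- u = 1, v ≥ 2, w ≥ 2
    right; left
    refine ⟨hv, hw2, hu, ?_⟩
    have hu1 : u = 1 := by omega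
    nlinarith [mul_le_mul_of_nonneg_right hv2 (show (0:ℤ) ≤ w - 1 by omega)]
  · -- u = 1, v ≥ 3, w = 1
    left
    have h3 : 3 ≤ v := by omega
    refine ⟨hu, by omega, hw, ?_⟩
    have hu1 : u = 1 := by omega
    have hw1 : w = 1 := by omega
    subst hu1; subst hw1; nlinarith
  · -- u = 1, v = 1, w ≥ 3
    right; left
    have h3 : 3 ≤ w := by omega
    refine ⟨hv, by omega, hu, ?_⟩
    have hu1 : u = 1 := by omega
    have hv1 : v = 1 := by omega
    subst hu1; subst hv1; nlinarith
  · exact absurd ⟨by omega, by omega, by omega⟩ e1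

lemma GOOD_of_weights (u v w : ℤ) (hu : 1 ≤ u) (hv : 1 ≤ v) (hw : 1 ≤ w)
    (e1 : ¬(u = 1 ∧ v = 1 ∧ w = 1))
    (e2 : ¬(u = 1 ∧ v = 1 ∧ w = 2))
    (e3 : ¬(u = 2 ∧ v = 1 ∧ w = 1))
    (e4 : ¬(u = 1 ∧ v = 2 ∧ w = 1))
    (e5 : ¬(u = 2 ∧ v = 2 ∧ w = 2)) :
    GOOD (mat u (-w) v) := by
  rcases rot_select u v w hu hv hw e1 e2 e3 e4 e5 with hq | hq | hq
  · exact ⟨u, v, w, hq, mutEquiv_refl _⟩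
  · exact ⟨v, w, u, hq, rotM u v w⟩
  · exact ⟨w, u, v, hq, mutEquiv_trans (rotM u v w) (rotM v w u)⟩


def NiceP (B : Matrix (Fin 3) (Fin 3) ℤ) : Prop :=
  ∃ σ : Equiv.Perm (Fin 3),
    (B (σ 0) (σ 1) = 2 ∧ B (σ 1) (σ 2) = 1 ∧ B (σ 2) (σ 0) = 1) ∨
    (B (σ 0) (σ 1) = 2 ∧ B (σ 1) (σ 2) = 2 ∧ B (σ 2) (σ 0) = 2)

lemma nice_perm (B : Matrix (Fin 3) (Fin 3) ℤ) (σ : Fin 3 ≃ Fin 3)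
    (h : NiceP (B.submatrix ⇑σ ⇑σ)) : NiceP B := by
  obtain ⟨τ, hτ⟩ := h
  exact ⟨τ.trans σ, by simpa [Matrix.submatrix_apply, Equiv.trans_apply] using hτ⟩

lemma case_cyc (p r w : ℤ) (hp : 1 ≤ p) (hr : 1 ≤ r) (hw : 1 ≤ w)
    (hd : p = 2 ∨ r = 2 ∨ w = 2) (hnice : ¬ NiceP (mat p (-w) r)) :
    GOOD (mat p (-w) r) := by
  apply GOOD_of_weights p r w hp hr hw
  · rintro ⟨h1, h2, h3⟩; omega
  · rintro ⟨rfl, rfl, rfl⟩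
    exact hnice ⟨rot.trans rot, Or.inl (by decide)⟩
  · rintro ⟨rfl, rfl, rfl⟩
    exact hnice ⟨Equiv.refl _, Or.inl (by decide)⟩
  · rintro ⟨rfl, rfl, rfl⟩
    exact hnice ⟨rot, Or.inl (by decide)⟩
  · rintro ⟨rfl, rfl, rfl⟩
    exact hnice ⟨Equiv.refl _, Or.inr (by decide)⟩

lemma case_pos (p q r : ℤ) (hp : 1 ≤ p) (hq : 1 ≤ q) (hr : 1 ≤ r)
    (hd : p = 2 ∨ q = 2 ∨ r = 2) : GOOD (mat p q r) := by
  have hpr : 1 ≤ p * r := by nlinarith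
  apply GOOD_of_mutate _ 1
  rw [mutate1]
  have e : q + Int.sign p * max (p * r) 0 = q + p * r := by
    rw [Int.sign_eq_one_of_pos (by omega), max_eq_left (by linarith), one_mul]
  rw [e]
  apply GOOD_of_perm _ s02
  rw [submatrix_s02, neg_neg, neg_neg]
  apply GOOD_of_weights r p (q + p * r) hr hp (by linarith)
  · rintro ⟨rfl, rfl, h3⟩; simp at h3; omega
  · rintro ⟨rfl, rfl, h3⟩; simp at h3; omega
  · rintro ⟨rfl, rfl, h3⟩; norm_num at h3; omega
  · rintro ⟨rfl, rfl, h3⟩; norm_num at h3; omega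
  · rintro ⟨rfl, rfl, h3⟩; norm_num at h3; omega

lemma case_path (x y : ℤ) (hx : 1 ≤ x) (hy : 1 ≤ y) (hd : x = 2 ∨ y = 2) :
    GOOD (mat x 0 y) := by
  have hxy : 1 ≤ x * y := by nlinarith
  apply GOOD_of_mutate _ 1
  rw [mutate1]
  have e : (0 : ℤ) + Int.sign x * max (x * y) 0 = x * y := by
    rw [Int.sign_eq_one_of_pos (by omega), max_eq_left (by linarith), one_mul, zero_add]
  rw [e]
  apply GOOD_of_perm _ s02
  rw [submatrix_s02, neg_neg, neg_neg]
  apply GOOD_of_weights y x (x * y) hy hx (by linarith)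
  · rintro ⟨rfl, rfl, h3⟩; omega
  · rintro ⟨rfl, rfl, h3⟩; omega
  · rintro ⟨rfl, rfl, h3⟩; norm_num at h3
  · rintro ⟨rfl, rfl, h3⟩; norm_num at h3
  · rintro ⟨rfl, rfl, h3⟩; norm_num at h3

lemma case_path_pr (p r : ℤ) (hp : 1 ≤ p) (hr : r ≠ 0)
    (hd : p = 2 ∨ r = 2 ∨ r = -2) : GOOD (mat p 0 r) := by
  rcases lt_or_gt_of_ne hr with hr' | hr'
  · apply GOOD_of_mutate _ 2
    rw [mutate2]
    have e : p + Int.sign (0:ℤ) * max ((0:ℤ) * (-r)) 0 = p := by simp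
    rw [e, neg_zero]
    exact case_path p (-r) hp (by omega) (by omega)
  · exact case_path p r hp (by omega) (by omega)

lemma case_path_signed (p r : ℤ) (hp : p ≠ 0) (hr : r ≠ 0)
    (hd : p = 2 ∨ p = -2 ∨ r = 2 ∨ r = -2) : GOOD (mat p 0 r) := by
  rcases lt_or_gt_of_ne hp with hp' | hp'
  · apply GOOD_of_mutate _ 0
    rw [mutate0]
    have e : r + Int.sign (-p) * max ((-p) * 0) 0 = r := by simp
    rw [e, neg_zero]
    exact case_path_pr (-p) r (by omega) hr (by omega)
  · exact case_path_pr p r (by omega) hr (by omega)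


lemma no_isolated {B : Matrix (Fin 3) (Fin 3) ℤ} (h : ConnectedQ B) (v u : Fin 3)
    (hvu : u ≠ v) (hiso : ∀ t, B v t = 0 ∧ B t v = 0) : False := by
  obtain ⟨wk⟩ := h.preconnected v u
  have hnil : ¬ wk.Nil := SimpleGraph.Walk.not_nil_of_ne (fun h' => hvu h'.symm)
  have ha := SimpleGraph.Walk.adj_snd hnil
  rcases ha.2 with h' | h'
  · exact h' (hiso _).1
  · exact h' (hiso _).2

lemma conn_pairs (p q r : ℤ) (h : ConnectedQ (mat p q r)) :
    (p ≠ 0 ∨ q ≠ 0) ∧ (p ≠ 0 ∨ r ≠ 0) ∧ (q ≠ 0 ∨ r ≠ 0) := by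
  refine ⟨?_, ?_, ?_⟩ <;> by_contra hc <;> push_neg at hc
  · obtain ⟨rfl, rfl⟩ : p = 0 ∧ q = 0 := hc
    exact no_isolated h 0 1 (by decide) (by intro t; fin_cases t <;> simp [mat, Matrix.vecHead, Matrix.vecTail])
  · obtain ⟨rfl, rfl⟩ : p = 0 ∧ r = 0 := hc
    exact no_isolated h 1 0 (by decide) (by intro t; fin_cases t <;> simp [mat, Matrix.vecHead, Matrix.vecTail])
  · obtain ⟨rfl, rfl⟩ : q = 0 ∧ r = 0 := hc
    exact no_isolated h 2 0 (by decide) (by intro t; fin_cases t <;> simp [mat, Matrix.vecHead, Matrix.vecTail])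

lemma double_tri (p q r : ℤ) (h : ∃ i j, |mat p q r i j| = 2) :
    (p = 2 ∨ p = -2) ∨ (q = 2 ∨ q = -2) ∨ (r = 2 ∨ r = -2) := by
  obtain ⟨i, j, hij⟩ := h
  have h2 : (0:ℤ) ≤ 2 := by norm_num
  fin_cases i <;> fin_cases j <;> simp [mat] at hij <;>
    rw [abs_eq h2] at hij <;> tauto

lemma forward_main (p q r : ℤ)
    (hconn : ConnectedQ (mat p q r))
    (hd : (p = 2 ∨ p = -2) ∨ (q = 2 ∨ q = -2) ∨ (r = 2 ∨ r = -2))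
    (hnice : ¬ NiceP (mat p q r)) : GOOD (mat p q r) := by
  obtain ⟨c1, c2, c3⟩ := conn_pairs p q r hconn
  rcases eq_or_ne q 0 with rfl | hq0
  · have hp0 : p ≠ 0 := by tauto
    have hr0 : r ≠ 0 := by tauto
    exact case_path_signed p r hp0 hr0 (by omega)
  rcases eq_or_ne p 0 with rfl | hp0
  · have hr0 : r ≠ 0 := by tauto
    apply GOOD_of_perm _ rot
    rw [submatrix_rot, neg_zero]
    exact case_path_signed r (-q) hr0 (neg_ne_zero.mpr hq0) (by omega)
  rcases eq_or_ne r 0 with rfl | hr0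
  · apply GOOD_of_perm _ rot
    rw [submatrix_rot]
    apply GOOD_of_perm _ rot
    rw [submatrix_rot, neg_neg, neg_zero]
    exact case_path_signed (-q) p (neg_ne_zero.mpr hq0) hp0 (by omega)
  rcases lt_or_gt_of_ne hp0 with hp | hp <;> rcases lt_or_gt_of_ne hq0 with hq | hq <;>
    rcases lt_or_gt_of_ne hr0 with hr | hr
  · -- (-,-,-) : s02 gives (+,+,+)
    apply GOOD_of_perm _ s02
    rw [submatrix_s02]
    exact case_pos (-r) (-q) (-p) (by omega) (by omega) (by omega) (by omega)
  · -- (-,-,+) : rot gives (r,-p,-q) = (+,+,+)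
    apply GOOD_of_perm _ rot
    rw [submatrix_rot]
    exact case_pos r (-p) (-q) (by omega) (by omega) (by omega) (by omega)
  · -- (-,+,-) : s02 gives (-r,-q,-p) = (+,-,+) cyclic
    apply GOOD_of_perm _ s02
    rw [submatrix_s02]
    have hn : ¬ NiceP (mat (-r) (-q) (-p)) := by
      intro hnn
      apply hnice
      have := nice_perm (mat p q r) s02
      rw [submatrix_s02] at this
      exact this hnn
    have e : mat (-r) (-q) (-p) = mat (-r) (-q) (-p) := rfl
    have : GOOD (mat (-r) (-(q)) (-p)) := by
      exact case_cyc (-r) (-p) q (by omega) (by omega) (by omega) (by omega) hn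
    exact this
  · -- (-,+,+) : s01 gives (-p, r, q) = (+,+,+)
    apply GOOD_of_perm _ s01
    rw [submatrix_s01]
    exact case_pos (-p) r q (by omega) (by omega) (by omega) (by omega)
  · -- (+,-,-) : rot twice gives (-q,-r,p) = (+,+,+)
    apply GOOD_of_perm _ rot
    rw [submatrix_rot]
    apply GOOD_of_perm _ rot
    rw [submatrix_rot, neg_neg]
    exact case_pos (-q) (-r) p (by omega) (by omega) (by omega) (by omega)
  · -- (+,-,+) : cyclic directly
    have e : q = -(-q) := (neg_neg q).symm
    rw [e] at hnice ⊢
    exact case_cyc p r (-q) (by omega) (by omega) (by omega) (by omega) hnice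
  · -- (+,+,-) : s12 gives (q, p, -r) = (+,+,+)
    apply GOOD_of_perm _ s12
    rw [submatrix_s12]
    exact case_pos q p (-r) (by omega) (by omega) (by omega) (by omega)
  · -- (+,+,+)
    exact case_pos p q r (by omega) (by omega) (by omega) (by omega)


def Tlist : List (Matrix (Fin 3) (Fin 3) ℤ) :=
  [mat (-2) 1 (-1), mat (-1) (-1) (-1), mat (-1) (-1) 1, mat (-1) 1 (-2),
   mat (-1) 1 1, mat (-1) 2 (-1), mat 1 (-2) 1, mat 1 (-1) (-1), mat 1 (-1) 2,
   mat 1 1 (-1), mat 1 1 1, mat 2 (-1) 1, mat 2 (-2) 2, mat (-2) 2 (-2)]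

lemma Tlist_closed : ∀ X ∈ Tlist, ∀ k : Fin 3, mutate X k ∈ Tlist := by decide

lemma Tlist_foldl : ∀ (l : List (Fin 3)) (X : Matrix (Fin 3) (Fin 3) ℤ),
    X ∈ Tlist → mutateList X l ∈ Tlist := by
  intro l
  induction l with
  | nil => intro X h; exact h
  | cons k l ih => intro X h; exact ih _ (Tlist_closed X h k)

lemma finite_class (A : Matrix (Fin 3) (Fin 3) ℤ) (hA : A ∈ Tlist) :
    FiniteMutationType A := by
  have hsub : {C : Matrix (Fin 3) (Fin 3) ℤ | MutEquiv A C} ⊆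
      ↑((Tlist.toFinset ×ˢ (Finset.univ : Finset (Fin 3 ≃ Fin 3))).image
        fun x => x.1.submatrix ⇑x.2 ⇑x.2) := by
    rintro C ⟨l, σ, rfl⟩
    simp only [Finset.coe_image, Set.mem_image, Finset.mem_coe, Finset.mem_product]
    refine ⟨(mutateList A l, σ), ?_, rfl⟩
    simp only [Finset.mem_product, Finset.mem_univ, and_true, List.mem_toFinset]
    exact Tlist_foldl l A hA
  exact Set.Finite.subset (Finset.finite_toSet _) hsub

end StmtAux

open StmtAux in
/-- a connected quiver on three vertices with a double edge is of
finite mutation type iff, up to relabeling, it is an oriented triangle with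
weights (2,1,1) or (2,2,2). -/
theorem stmt1 (B : Matrix (Fin 3) (Fin 3) ℤ) (hB : IsSkewQ B) (hconn : ConnectedQ B)
    (hdouble : ∃ i j, |B i j| = 2) :
    FiniteMutationType B ↔
      ∃ σ : Equiv.Perm (Fin 3),
        (B (σ 0) (σ 1) = 2 ∧ B (σ 1) (σ 2) = 1 ∧ B (σ 2) (σ 0) = 1) ∨
        (B (σ 0) (σ 1) = 2 ∧ B (σ 1) (σ 2) = 2 ∧ B (σ 2) (σ 0) = 2) := by
  constructor
  · intro hfin
    by_contra hnice
    rw [skew_eq_mat B hB] at hconn hdouble hfin hnice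
    have hgood : GOOD (mat (B 0 1) (B 0 2) (B 1 2)) :=
      forward_main _ _ _ hconn (double_tri _ _ _ hdouble) hnice
    obtain ⟨a, b, c, hq, he⟩ := hgood
    have hsub : {C : Matrix (Fin 3) (Fin 3) ℤ | MutEquiv (mat a (-c) b) C} ⊆
        {C : Matrix (Fin 3) (Fin 3) ℤ | MutEquiv (mat (B 0 1) (B 0 2) (B 1 2)) C} :=
      fun C hC => mutEquiv_trans he hC
    exact ((INF hq).mono hsub) hfin
  · rintro ⟨σ, hcase⟩
    have hAskew : IsSkewQ (B.submatrix ⇑σ ⇑σ) := fun i j => hB (σ i) (σ j)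
    have hBA : ∀ A : Matrix (Fin 3) (Fin 3) ℤ, B.submatrix ⇑σ ⇑σ = A → MutEquiv A B := by
      rintro A rfl
      refine ⟨[], σ.symm, ?_⟩
      show B = ((B.submatrix ⇑σ ⇑σ)).submatrix ⇑σ.symm ⇑σ.symm
      rw [Matrix.submatrix_submatrix, Equiv.self_comp_symm, Matrix.submatrix_id_id]
    rcases hcase with ⟨h1, h2, h3⟩ | ⟨h1, h2, h3⟩
    · have h02 : B (σ 0) (σ 2) = -1 := by
        have h := hB (σ 2) (σ 0); rw [h3] at h; exact h
      have hA : B.submatrix ⇑σ ⇑σ = mat 2 (-1) 1 := by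
        rw [skew_eq_mat _ hAskew]
        rw [show (B.submatrix ⇑σ ⇑σ) 0 1 = (2:ℤ) from h1,
            show (B.submatrix ⇑σ ⇑σ) 0 2 = (-1:ℤ) from h02,
            show (B.submatrix ⇑σ ⇑σ) 1 2 = (1:ℤ) from h2]
      have hfinA := finite_class (mat 2 (-1) 1) (by decide)
      exact Set.Finite.subset hfinA (fun C hC => mutEquiv_trans (hBA _ hA) hC)
    · have h02 : B (σ 0) (σ 2) = -2 := by
        have h := hB (σ 2) (σ 0); rw [h3] at h; exact h
      have hA : B.submatrix ⇑σ ⇑σ = mat 2 (-2) 2 := by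
        rw [skew_eq_mat _ hAskew]
        rw [show (B.submatrix ⇑σ ⇑σ) 0 1 = (2:ℤ) from h1,
            show (B.submatrix ⇑σ ⇑σ) 0 2 = (-2:ℤ) from h02,
            show (B.submatrix ⇑σ ⇑σ) 1 2 = (2:ℤ) from h2]
      have hfinA := finite_class (mat 2 (-2) 2) (by decide)
      exact Set.Finite.subset hfinA (fun C hC => mutEquiv_trans (hBA _ hA) hC)
end
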